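/- Let G be a finite group and H a non-trivial normal subgroup of G. Then H is a perfect code in some Cayley graph of G if and only if for every pair of integers a, b with 0 ≤ a ≤ |H| − 1, 0 ≤ b ≤ |H| and gcd(2,|H|−1) dividing a, H is an (a,b)-regular set in some Cayley graph of G. -/

import Mathlib

/-- The Cayley graph of a group `G` with connection set `S`:
`x` is adjacent to `y` iff `y * x⁻¹ ∈ S` (symmetrized; for inverse-closed `S`
not containing `1` this is the usual Cayley graph). -/
def cayley {G : Type*} [Group G] (S : Set G) : SimpleGraph G :=
  SimpleGraph.fromRel (fun x y => y * x⁻¹ ∈ S)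

/-- `C` is an `(a,b)`-regular set in `Γ`: every vertex in `C` has exactly `a`
neighbors in `C`, and every vertex outside `C` has exactly `b` neighbors in `C`. -/
def IsRegularSet {V : Type*} (Γ : SimpleGraph V) (C : Set V) (a b : ℕ) : Prop :=
  (∀ v ∈ C, (Γ.neighborSet v ∩ C).ncard = a) ∧
  (∀ v ∉ C, (Γ.neighborSet v ∩ C).ncard = b)

section helpers
variable {G : Type*} [Group G]

lemma mem_inv_closed {C : Set G} (hC : C⁻¹ = C) {x : G} : x⁻¹ ∈ C ↔ x ∈ C := by
  constructor
  · intro h; have : x⁻¹ ∈ C⁻¹ := by rw [hC]; exact h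
    simpa using this
  · intro h; have : x ∈ C⁻¹ := by rw [hC]; exact h
    simpa using this

lemma diff_pair_inv_closed {C : Set G} (hC : C⁻¹ = C) (x : G) :
    (C \ {x, x⁻¹})⁻¹ = C \ {x, x⁻¹} := by
  ext y
  simp only [Set.mem_inv, Set.mem_diff, Set.mem_insert_iff, Set.mem_singleton_iff]
  rw [mem_inv_closed hC]
  constructor
  · rintro ⟨hy, hne⟩
    refine ⟨hy, ?_⟩
    push_neg at hne ⊢
    refine ⟨?_, ?_⟩
    · rintro rfl; exact hne.2 rfl
    · rintro rfl; exact hne.1 (by simp)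
  · rintro ⟨hy, hne⟩
    refine ⟨hy, ?_⟩
    push_neg at hne ⊢
    refine ⟨?_, ?_⟩
    · intro h; exact hne.2 (by rw [← h]; simp)
    · intro h; exact hne.1 (by rw [← inv_inv y, h]; simp)

lemma even_ncard_of_no_selfinv :
    ∀ n (C : Set G), C.Finite → C.ncard = n → C⁻¹ = C → (∀ x ∈ C, x⁻¹ ≠ x) →
      Even n := by
  intro n
  induction n using Nat.strong_induction_on with
  | _ n ih =>
    intro C hfin hcard hC hni
    rcases Nat.eq_zero_or_pos n with rfl | hpos
    · exact Even.zero
    · have hne : C.Nonempty := by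
        rw [Set.nonempty_iff_ne_empty]
        rintro rfl; simp at hcard; omega
      obtain ⟨x, hx⟩ := hne
      have hxi : x⁻¹ ∈ C := (mem_inv_closed hC).2 hx
      have hxx : x⁻¹ ≠ x := hni x hx
      set C' := C \ {x, x⁻¹} with hC'
      have hsub : ({x, x⁻¹} : Set G) ⊆ C := by
        rintro y (rfl | rfl) <;> assumption
      have hcard' : C'.ncard = n - 2 := by
        rw [Set.ncard_diff hsub, hcard, Set.ncard_pair (Ne.symm hxx)]
      have hn2 : 2 ≤ n := by
        have : ({x, x⁻¹} : Set G).ncard ≤ C.ncard := Set.ncard_le_ncard hsub hfin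
        rw [hcard, Set.ncard_pair (Ne.symm hxx)] at this
        exact this
      have hev := ih (n - 2) (by omega) C' hfin.diff hcard'
        (diff_pair_inv_closed hC x) (fun y hy => hni y hy.1)
      rcases hev with ⟨k, hk⟩
      exact ⟨k + 1, by omega⟩

lemma master_lemma :
    ∀ n (C : Set G), C.Finite → C.ncard = n → C⁻¹ = C →
      ∀ b ≤ n, (Even b ∨ ∃ s ∈ C, s⁻¹ = s) →
      ∃ B ⊆ C, B⁻¹ = B ∧ B.ncard = b := by
  intro n
  induction n using Nat.strong_induction_on with
  | _ n ih =>
    intro C hfin hcard hC b hb hcond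
    rcases Nat.eq_zero_or_pos b with rfl | hbpos
    · exact ⟨∅, Set.empty_subset _, by simp, by simp⟩
    rcases eq_or_lt_of_le hb with rfl | hlt
    · exact ⟨C, subset_rfl, hC, hcard⟩
    by_cases hsi : ∃ s ∈ C, s⁻¹ = s
    · obtain ⟨s, hs, hss⟩ := hsi
      rcases eq_or_lt_of_le (Nat.succ_le_of_lt hlt) with hbn | hlt2
      · -- b + 1 = n : take C \ {s}
        refine ⟨C \ {s}, Set.diff_subset, ?_, ?_⟩
        · ext y
          simp only [Set.mem_inv, Set.mem_diff, Set.mem_singleton_iff]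
          rw [mem_inv_closed hC]
          constructor
          · rintro ⟨hy, hne⟩
            exact ⟨hy, fun h => hne (by rw [h, hss])⟩
          · rintro ⟨hy, hne⟩
            exact ⟨hy, fun h => hne (by rw [← hss, ← h, inv_inv])⟩
        · rw [Set.ncard_diff_singleton_of_mem hs, hcard]
          omega
      · -- b ≤ n - 2 : remove a pair {x, x⁻¹} with x ≠ s
        have h2 : 2 ≤ (C \ {s}).ncard := by
          rw [Set.ncard_diff_singleton_of_mem hs, hcard]; omega
        have : (C \ {s}).Nonempty := by
          rw [Set.nonempty_iff_ne_empty]; intro h; rw [h] at h2; simp at h2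
        obtain ⟨x, hxC, hxs⟩ := this
        set C' := C \ {x, x⁻¹} with hC'
        have hsub : ({x, x⁻¹} : Set G) ⊆ C := by
          rintro y (rfl | rfl)
          · exact hxC
          · exact (mem_inv_closed hC).2 hxC
        have hpair : ({x, x⁻¹} : Set G).ncard ≤ 2 := by
          apply le_trans (Set.ncard_insert_le _ _); simp
        have hpair1 : 1 ≤ ({x, x⁻¹} : Set G).ncard :=
          by
            rw [Nat.one_le_iff_ne_zero, ← Nat.pos_iff_ne_zero]
            exact (Set.ncard_pos ((Set.finite_singleton x⁻¹).insert x)).2 ⟨x, by simp⟩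
        have hcard' : C'.ncard = n - ({x, x⁻¹} : Set G).ncard := by
          rw [Set.ncard_diff hsub, hcard]
        have hsC' : s ∈ C' := by
          refine ⟨hs, ?_⟩
          simp only [Set.mem_insert_iff, Set.mem_singleton_iff]
          push_neg
          have hxs' : x ≠ s := by simpa using hxs
          refine ⟨fun h => hxs' h.symm, fun h => ?_⟩
          exact hxs' (by rw [← inv_inv x, ← h, hss])
        obtain ⟨B, hB1, hB2, hB3⟩ := ih C'.ncard (by omega) C' hfin.diff rfl
          (diff_pair_inv_closed hC x) b (by omega) (Or.inr ⟨s, hsC', hss⟩)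
        exact ⟨B, hB1.trans Set.diff_subset, hB2, hB3⟩
    · have hev : Even b := hcond.resolve_right hsi
      push_neg at hsi
      have heven : Even n := even_ncard_of_no_selfinv n C hfin hcard hC hsi
      have hne : C.Nonempty := by
        rw [Set.nonempty_iff_ne_empty]; rintro rfl; simp at hcard; omega
      obtain ⟨x, hx⟩ := hne
      set C' := C \ {x, x⁻¹} with hC'
      have hsub : ({x, x⁻¹} : Set G) ⊆ C := by
        rintro y (rfl | rfl)
        · exact hx
        · exact (mem_inv_closed hC).2 hx
      have hpair : ({x, x⁻¹} : Set G).ncard ≤ 2 := by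
        apply le_trans (Set.ncard_insert_le _ _); simp
      have hpair1 : 1 ≤ ({x, x⁻¹} : Set G).ncard := by
        rw [Nat.one_le_iff_ne_zero, ← Nat.pos_iff_ne_zero]
        exact (Set.ncard_pos ((Set.finite_singleton x⁻¹).insert x)).2 ⟨x, by simp⟩
      have hcard' : C'.ncard = n - ({x, x⁻¹} : Set G).ncard := by
        rw [Set.ncard_diff hsub, hcard]
      have hble : b ≤ C'.ncard := by
        rcases hev with ⟨i, hi⟩; rcases heven with ⟨j, hj⟩
        omega
      obtain ⟨B, hB1, hB2, hB3⟩ := ih C'.ncard (by omega) C' hfin.diff rfl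
        (diff_pair_inv_closed hC x) b hble (Or.inl hev)
      exact ⟨B, hB1.trans Set.diff_subset, hB2, hB3⟩

lemma cayley_adj {S : Set G} (hS : S⁻¹ = S) {v w : G} (h1 : (1:G) ∉ S) :
    (cayley S).Adj v w ↔ w * v⁻¹ ∈ S := by
  simp only [cayley, SimpleGraph.fromRel_adj]
  constructor
  · rintro ⟨hne, h | h⟩
    · exact h
    · have := (mem_inv_closed hS (x := v * w⁻¹)).2 h
      simpa using this
  · intro h
    refine ⟨?_, Or.inl h⟩
    rintro rfl
    simp at h
    exact h1 h

lemma neighbor_inter_image {S : Set G} (hS : S⁻¹ = S) (h1 : (1:G) ∉ S)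
    (H : Subgroup G) [H.Normal] (x : G) :
    (fun y => y * x⁻¹) '' ((cayley S).neighborSet x ∩ (H : Set G)) =
      {z | z ∈ S ∧ (z : G ⧸ H) = ((x : G ⧸ H))⁻¹} := by
  ext z
  simp only [Set.mem_image, Set.mem_inter_iff, SimpleGraph.mem_neighborSet,
    Set.mem_setOf_eq, cayley_adj hS h1]
  constructor
  · rintro ⟨y, ⟨hyS, hyH⟩, rfl⟩
    refine ⟨hyS, ?_⟩
    have : ((y : G ⧸ H)) = 1 := (QuotientGroup.eq_one_iff y).2 hyH
    rw [QuotientGroup.mk_mul, QuotientGroup.mk_inv, this, one_mul]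
  · rintro ⟨hzS, hz⟩
    refine ⟨z * x, ⟨by simpa using hzS, ?_⟩, by simp⟩
    rw [SetLike.mem_coe, ← QuotientGroup.eq_one_iff, QuotientGroup.mk_mul, hz]
    simp

lemma ncard_inv_set (C : Set G) : (C⁻¹).ncard = C.ncard := by
  have : C⁻¹ = (fun x => x⁻¹) '' C := by
    ext y; simp [Set.mem_inv, eq_comm, inv_eq_iff_eq_inv]
  rw [this]
  exact Set.ncard_image_of_injective _ inv_injective

end helpers

theorem stmt5 {G : Type*} [Group G] [Fintype G] (H : Subgroup G) [H.Normal]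
    (hnt : H ≠ ⊥) :
    (∃ S₀ : Set G, S₀⁻¹ = S₀ ∧ (1 : G) ∉ S₀ ∧
        IsRegularSet (cayley S₀) (H : Set G) 0 1) ↔
      (∀ a b : ℕ, a ≤ Nat.card H - 1 → b ≤ Nat.card H →
        Nat.gcd 2 (Nat.card H - 1) ∣ a →
        ∃ S : Set G, S⁻¹ = S ∧ (1 : G) ∉ S ∧
          IsRegularSet (cayley S) (H : Set G) a b) := by
  classical
  constructor
  · rintro ⟨S₀, hS₀, h1₀, hin₀, hout₀⟩ a b ha hb hgcd
    set n := Nat.card H with hn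
    -- basic facts
    have hnpos : 0 < n := Nat.card_pos
    have hmem1 : ∀ x : G, (x : G ⧸ H) = 1 ↔ x ∈ H := fun x => QuotientGroup.eq_one_iff x
    -- Step A : each nontrivial coset of S₀ has exactly one element, self-paired
    have hA : ∀ p : G ⧸ H, p ≠ 1 → {z | z ∈ S₀ ∧ (z : G ⧸ H) = p}.ncard = 1 := by
      intro p hp
      obtain ⟨x, hx⟩ := QuotientGroup.mk_surjective p⁻¹
      have hp2 : ((x : G ⧸ H))⁻¹ = p := by rw [hx, inv_inv]
      have hxH : x ∉ (H : Set G) := by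
        intro hxh
        apply hp
        rw [← hp2, inv_eq_one, hmem1]
        exact hxh
      have hcard1 := hout₀ x hxH
      rw [← hp2, ← neighbor_inter_image hS₀ h1₀ H x,
        Set.ncard_image_of_injective _ (fun y z h => by simpa using mul_right_cancel h)]
      simpa using hcard1
    -- representative function
    have hrep : ∀ p : G ⧸ H, p ≠ 1 → ∃ s, s ∈ S₀ ∧ (s : G ⧸ H) = p ∧ (p⁻¹ = p → s⁻¹ = s) := by
      intro p hp
      obtain ⟨z, hz⟩ := Set.ncard_eq_one.1 (hA p hp)
      have hzmem : z ∈ S₀ ∧ (z : G ⧸ H) = p := by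
        have : z ∈ ({z} : Set G) := rfl
        rw [← hz] at this; exact this
      refine ⟨z, hzmem.1, hzmem.2, ?_⟩
      intro hpp
      have hz1 : z⁻¹ ∈ {w | w ∈ S₀ ∧ (w : G ⧸ H) = p} := by
        refine ⟨(mem_inv_closed hS₀).2 hzmem.1, ?_⟩
        rw [QuotientGroup.mk_inv, hzmem.2, hpp]
      rw [hz] at hz1
      exact hz1
    -- Step B : fibers have cardinality n
    have hfib : ∀ p : G ⧸ H, {x : G | (x : G ⧸ H) = p}.ncard = n := by
      intro p
      obtain ⟨x₀, rfl⟩ := QuotientGroup.mk_surjective p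
      have himg : {x : G | (x : G ⧸ H) = (x₀ : G ⧸ H)} = (fun h => h * x₀) '' (H : Set G) := by
        ext y
        simp only [Set.mem_setOf_eq, Set.mem_image]
        constructor
        · intro hy
          refine ⟨y * x₀⁻¹, ?_, by simp⟩
          rw [SetLike.mem_coe, ← hmem1, QuotientGroup.mk_mul, QuotientGroup.mk_inv, hy]
          simp
        · rintro ⟨h, hh, rfl⟩
          rw [QuotientGroup.mk_mul, (hmem1 h).2 hh, one_mul]
      rw [himg, Set.ncard_image_of_injective _ (fun y z h => by simpa using mul_right_cancel h)]
      rw [← Nat.card_coe_set_eq]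
      rfl
    -- fibers and inverse
    have hfibinv : ∀ p : G ⧸ H, {x : G | (x : G ⧸ H) = p}⁻¹ = {x : G | (x : G ⧸ H) = p⁻¹} := by
      intro p
      ext y
      simp only [Set.mem_inv, Set.mem_setOf_eq, QuotientGroup.mk_inv]
      constructor
      · intro h; rw [← h]; simp
      · intro h; rw [h]; simp
    -- Step D : construct A₀ ⊆ H \ {1}
    have hC₀inv : ((H : Set G) \ {1})⁻¹ = (H : Set G) \ {1} := by
      ext y
      simp only [Set.mem_inv, Set.mem_diff, Set.mem_singleton_iff, SetLike.mem_coe]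
      constructor
      · rintro ⟨hy, hy1⟩
        exact ⟨by simpa using inv_mem hy, fun h => hy1 (by rw [h]; simp)⟩
      · rintro ⟨hy, hy1⟩
        exact ⟨inv_mem hy, fun h => hy1 (by rw [← inv_inv y, h]; simp)⟩
    have hC₀card : ((H : Set G) \ {1}).ncard = n - 1 := by
      rw [Set.ncard_diff_singleton_of_mem (show (1:G) ∈ (H : Set G) by simp [H.one_mem]),
        ← Nat.card_coe_set_eq]
      rfl
    have hAcond : Even a ∨ ∃ s ∈ (H : Set G) \ {1}, s⁻¹ = s := by
      by_cases hev : Even (n - 1)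
      · left
        obtain ⟨k, hk⟩ := hev
        have : Nat.gcd 2 (n - 1) = 2 := Nat.gcd_eq_left ⟨k, by omega⟩
        rw [this] at hgcd
        exact (even_iff_two_dvd).2 hgcd
      · right
        by_contra hno
        push_neg at hno
        exact hev (by
          have := even_ncard_of_no_selfinv ((H : Set G) \ {1}).ncard _ (Set.toFinite _)
            rfl hC₀inv hno
          rwa [hC₀card] at this)
    obtain ⟨A₀, hA₀sub, hA₀inv, hA₀card⟩ :=
      master_lemma ((H : Set G) \ {1}).ncard ((H : Set G) \ {1}) (Set.toFinite _) rfl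
        hC₀inv a (by rw [hC₀card]; exact ha) hAcond
    -- Step E : fix a pairing on the quotient
    obtain ⟨m, ⟨e⟩⟩ := Finite.exists_equiv_fin (G ⧸ H)
    set R : Set (G ⧸ H) := {p | (e p : ℕ) ≤ (e p⁻¹ : ℕ)} with hR
    have hRtot : ∀ p : G ⧸ H, p ∈ R ∨ p⁻¹ ∈ R := by
      intro p
      rcases le_total (e p : ℕ) (e p⁻¹ : ℕ) with h | h
      · exact Or.inl h
      · right; rw [hR]; simpa using h
    have hRanti : ∀ p : G ⧸ H, p ∈ R → p⁻¹ ∈ R → p⁻¹ = p := by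
      intro p h1 h2
      rw [hR, Set.mem_setOf_eq, inv_inv] at h2
      have : e p = e p⁻¹ := Fin.le_antisymm h1 h2
      exact (e.injective this).symm
    -- existence of per-coset sets
    have hex : ∀ p : G ⧸ H, p ≠ 1 →
        ∃ B, B ⊆ {x : G | (x : G ⧸ H) = p} ∧ B.ncard = b ∧ (p⁻¹ = p → B⁻¹ = B) := by
      intro p hp
      by_cases hpp : p⁻¹ = p
      · obtain ⟨s, hsS, hsp, hss⟩ := hrep p hp
        obtain ⟨B, hB1, hB2, hB3⟩ := master_lemma {x : G | (x : G ⧸ H) = p}.ncard _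
          (Set.toFinite _) rfl (by rw [hfibinv, hpp]) b (by rw [hfib]; exact hb)
          (Or.inr ⟨s, hsp, hss hpp⟩)
        exact ⟨B, hB1, hB3, fun _ => hB2⟩
      · obtain ⟨B, hB1, hB2⟩ := Set.exists_subset_card_eq (n := b)
          (s := {x : G | (x : G ⧸ H) = p}) (by rw [hfib]; exact hb)
        exact ⟨B, hB1, hB2, fun h => absurd h hpp⟩
    have hex' : ∀ p : G ⧸ H, ∃ B : Set G, p ≠ 1 →
        B ⊆ {x : G | (x : G ⧸ H) = p} ∧ B.ncard = b ∧ (p⁻¹ = p → B⁻¹ = B) := by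
      intro p
      by_cases hp : p = 1
      · exact ⟨∅, fun h => absurd hp h⟩
      · obtain ⟨B, hB⟩ := hex p hp
        exact ⟨B, fun _ => hB⟩
    choose B0 hB0 using hex'
    have hinv_ne : ∀ p : G ⧸ H, p ≠ 1 → p⁻¹ ≠ 1 := by
      intro p hp h
      exact hp (by rw [← inv_inv p, h, inv_one])
    set Bf : (G ⧸ H) → Set G := fun p => if p ∈ R then B0 p else (B0 p⁻¹)⁻¹ with hBf
    have hBfib : ∀ p : G ⧸ H, p ≠ 1 → Bf p ⊆ {x : G | (x : G ⧸ H) = p} := by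
      intro p hp
      simp only [hBf]
      by_cases hpR : p ∈ R
      · rw [if_pos hpR]; exact (hB0 p hp).1
      · rw [if_neg hpR]
        have h1 := (hB0 p⁻¹ (hinv_ne p hp)).1
        calc (B0 p⁻¹)⁻¹ ⊆ {x : G | (x : G ⧸ H) = p⁻¹}⁻¹ := Set.inv_subset_inv.2 h1
        _ = {x : G | (x : G ⧸ H) = p⁻¹⁻¹} := hfibinv _
        _ = {x : G | (x : G ⧸ H) = p} := by rw [inv_inv]
    have hBcard : ∀ p : G ⧸ H, p ≠ 1 → (Bf p).ncard = b := by
      intro p hp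
      simp only [hBf]
      by_cases hpR : p ∈ R
      · rw [if_pos hpR]; exact (hB0 p hp).2.1
      · rw [if_neg hpR, ncard_inv_set]
        exact (hB0 p⁻¹ (hinv_ne p hp)).2.1
    have hBinv : ∀ p : G ⧸ H, p ≠ 1 → (Bf p)⁻¹ = Bf p⁻¹ := by
      intro p hp
      simp only [hBf]
      by_cases hpR : p ∈ R <;> by_cases hpR' : p⁻¹ ∈ R
      · have hpp := hRanti p hpR hpR'
        rw [if_pos hpR, hpp, if_pos hpR]
        exact (hB0 p hp).2.2 hpp
      · rw [if_pos hpR, if_neg hpR', inv_inv]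
      · rw [if_neg hpR, if_pos hpR', inv_inv]
      · rcases hRtot p with h | h
        · exact absurd h hpR
        · exact absurd h hpR'
    set T : Set G := ⋃ (p : G ⧸ H) (_ : p ≠ 1), Bf p with hT
    have hmemT : ∀ z : G, z ∈ T ↔ ∃ p : G ⧸ H, p ≠ 1 ∧ z ∈ Bf p := by
      intro z; rw [hT]; simp [Set.mem_iUnion]
    have hTH : ∀ z ∈ T, (z : G ⧸ H) ≠ 1 := by
      intro z hz
      obtain ⟨p, hp, hzp⟩ := (hmemT z).1 hz
      have := hBfib p hp hzp
      rw [Set.mem_setOf_eq] at this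
      rw [this]; exact hp
    set S : Set G := A₀ ∪ T with hSdef
    have hA₀H : ∀ z ∈ A₀, z ∈ H := fun z hz => (hA₀sub hz).1
    have hSinterH : S ∩ (H : Set G) = A₀ := by
      ext z
      simp only [hSdef, Set.mem_inter_iff, Set.mem_union, SetLike.mem_coe]
      constructor
      · rintro ⟨hz | hz, hzH⟩
        · exact hz
        · exact absurd ((hmem1 z).2 hzH) (hTH z hz)
      · intro hz
        exact ⟨Or.inl hz, hA₀H z hz⟩
    have hSinterFib : ∀ p : G ⧸ H, p ≠ 1 → S ∩ {x : G | (x : G ⧸ H) = p} = Bf p := by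
      intro p hp
      ext z
      simp only [hSdef, Set.mem_inter_iff, Set.mem_union, Set.mem_setOf_eq]
      constructor
      · rintro ⟨hz | hz, hzp⟩
        · exact absurd hzp (by rw [(hmem1 z).2 (hA₀H z hz)]; exact fun h => hp h.symm)
        · obtain ⟨q, hq, hzq⟩ := (hmemT z).1 hz
          have := hBfib q hq hzq
          rw [Set.mem_setOf_eq] at this
          have hqp : q = p := by rw [← hzp, ← this]
          rwa [hqp] at hzq
      · intro hz
        exact ⟨Or.inr ((hmemT z).2 ⟨p, hp, hz⟩), hBfib p hp hz⟩
    have hTinv1 : ∀ z : G, z⁻¹ ∈ T → z ∈ T := by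
      intro z hz
      obtain ⟨p, hp, hzp⟩ := (hmemT z⁻¹).1 hz
      refine (hmemT z).2 ⟨p⁻¹, hinv_ne p hp, ?_⟩
      rw [← hBinv p hp]
      exact Set.mem_inv.2 hzp
    have hSinv : S⁻¹ = S := by
      ext z
      simp only [Set.mem_inv, hSdef, Set.mem_union]
      constructor
      · rintro (hz | hz)
        · exact Or.inl ((mem_inv_closed hA₀inv).1 hz)
        · exact Or.inr (hTinv1 z hz)
      · rintro (hz | hz)
        · exact Or.inl ((mem_inv_closed hA₀inv).2 hz)
        · refine Or.inr (hTinv1 z⁻¹ ?_)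
          rw [inv_inv]
          exact hz
    have h1S : (1 : G) ∉ S := by
      rintro (h | h)
      · exact (hA₀sub h).2 rfl
      · exact hTH 1 h (by simp)
    refine ⟨S, hSinv, h1S, ?_, ?_⟩
    · intro v hv
      have hkey : ((cayley S).neighborSet v ∩ (H : Set G)).ncard =
          {z | z ∈ S ∧ (z : G ⧸ H) = ((v : G ⧸ H))⁻¹}.ncard := by
        rw [← neighbor_inter_image hSinv h1S H v,
          Set.ncard_image_of_injective _ (fun y z h => by simpa using mul_right_cancel h)]
      rw [hkey]
      have hv1 : ((v : G ⧸ H))⁻¹ = 1 := by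
        rw [(hmem1 v).2 hv, inv_one]
      have : {z | z ∈ S ∧ (z : G ⧸ H) = ((v : G ⧸ H))⁻¹} = S ∩ (H : Set G) := by
        ext z
        rw [hv1]
        simp only [Set.mem_setOf_eq, Set.mem_inter_iff, SetLike.mem_coe, hmem1]
      rw [this, hSinterH, hA₀card]
    · intro x hx
      have hkey : ((cayley S).neighborSet x ∩ (H : Set G)).ncard =
          {z | z ∈ S ∧ (z : G ⧸ H) = ((x : G ⧸ H))⁻¹}.ncard := by
        rw [← neighbor_inter_image hSinv h1S H x,
          Set.ncard_image_of_injective _ (fun y z h => by simpa using mul_right_cancel h)]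
      rw [hkey]
      have hp : ((x : G ⧸ H))⁻¹ ≠ 1 := by
        intro h
        exact hx ((hmem1 x).1 (by rw [← inv_inv ((x : G ⧸ H)), h, inv_one]))
      have : {z | z ∈ S ∧ (z : G ⧸ H) = ((x : G ⧸ H))⁻¹} =
          S ∩ {y : G | (y : G ⧸ H) = ((x : G ⧸ H))⁻¹} := rfl
      rw [this, hSinterFib _ hp, hBcard _ hp]
  · intro h
    have h1 : 1 ≤ Nat.card H := Nat.card_pos
    obtain ⟨S, hS, h1S, hreg⟩ := h 0 1 (Nat.zero_le _) h1 (Dvd.intro 0 rfl)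
    exact ⟨S, hS, h1S, hreg⟩
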